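/- For real numbers τ > 0, μ > 0 with τ ≠ μ, and any t ∈ ℝ, the inverse Fourier transform m_τ(t,μ) = (1/2π) ∫_ℝ e^{itη} / (η² + 2iτη − τ² + μ²) dη satisfies |m_τ(t,μ)| ≤ (1/μ) e^{−|τ−μ||t|}. -/

import Mathlib

open Real Complex MeasureTheory
open Set Filter FourierTransform

noncomputable def hfun (c : ℝ) (x : ℝ) : ℂ :=
  if 0 < c then (if x < 0 then Complex.exp ((c : ℂ) * x) else 0)
  else (if x < 0 then 0 else -Complex.exp ((c : ℂ) * x))

lemma norm_hfun_le (c x : ℝ) : ‖hfun c x‖ ≤ Real.exp (-(|c| * |x|)) := by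
  unfold hfun
  rcases lt_or_ge 0 c with hc | hc
  · rw [if_pos hc]
    rcases lt_or_ge x 0 with hx | hx
    · rw [if_pos hx, Complex.norm_exp]
      apply le_of_eq
      congr 1
      rw [abs_of_pos hc, abs_of_neg hx]
      simp [Complex.mul_re]
    · rw [if_neg (not_lt.2 hx)]
      simp [Real.exp_nonneg]
  · rw [if_neg (not_lt.2 hc)]
    rcases lt_or_ge x 0 with hx | hx
    · rw [if_pos hx]; simp [Real.exp_nonneg]
    · rw [if_neg (not_lt.2 hx), norm_neg, Complex.norm_exp]
      apply le_of_eq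
      congr 1
      rw [abs_of_nonpos hc, _root_.abs_of_nonneg hx]
      simp [Complex.mul_re]

lemma integrableOn_cexp_Iic {z : ℂ} (hz : 0 < z.re) :
    IntegrableOn (fun x : ℝ => Complex.exp (z * x)) (Iic (0:ℝ)) := by
  apply Integrable.mono' (integrableOn_exp_mul_Iic hz 0)
  · exact (Complex.continuous_exp.comp (continuous_const.mul Complex.continuous_ofReal)).aestronglyMeasurable
  · refine ae_of_all _ fun x => ?_
    rw [Complex.norm_exp]
    simp [Complex.mul_re]

lemma integrableOn_cexp_Ioi {z : ℂ} (hz : z.re < 0) :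
    IntegrableOn (fun x : ℝ => Complex.exp (z * x)) (Ioi (0:ℝ)) := by
  have h : IntegrableOn (fun x : ℝ => Real.exp (-(-z.re) * x)) (Ioi (0:ℝ)) :=
    exp_neg_integrableOn_Ioi 0 (by linarith)
  apply Integrable.mono' h
  · exact (Complex.continuous_exp.comp (continuous_const.mul Complex.continuous_ofReal)).aestronglyMeasurable
  · refine ae_of_all _ fun x => ?_
    rw [Complex.norm_exp]
    simp [Complex.mul_re]

lemma hasDerivAt_cexp_mul0 (z : ℂ) (x : ℝ) :
    HasDerivAt (fun y : ℝ => Complex.exp (z * y)) (z * Complex.exp (z * x)) x := by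
  have h1 : HasDerivAt (fun y : ℂ => Complex.exp (z * y)) (z * Complex.exp (z * (x:ℂ))) (x:ℂ) := by
    simpa [mul_comm, Function.comp_def] using (Complex.hasDerivAt_exp (z * x)).comp (x:ℂ)
      ((hasDerivAt_id (x:ℂ)).const_mul z)
  exact h1.comp_ofReal

lemma hasDerivAt_cexp_mul {z : ℂ} (hz : z ≠ 0) (x : ℝ) :
    HasDerivAt (fun y : ℝ => z⁻¹ * Complex.exp (z * y)) (Complex.exp (z * x)) x := by
  have := (hasDerivAt_cexp_mul0 z x).const_mul z⁻¹
  rwa [← mul_assoc, inv_mul_cancel₀ hz, one_mul] at this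

lemma tendsto_cexp_atBot {z : ℂ} (hz : 0 < z.re) :
    Tendsto (fun x : ℝ => z⁻¹ * Complex.exp (z * x)) atBot (nhds 0) := by
  rw [tendsto_zero_iff_norm_tendsto_zero]
  have h : Tendsto (fun x : ℝ => ‖z⁻¹‖ * Real.exp (z.re * x)) atBot (nhds (‖z⁻¹‖ * 0)) :=
    (Real.tendsto_exp_atBot.comp (tendsto_id.const_mul_atBot hz)).const_mul _
  rw [mul_zero] at h
  refine h.congr fun x => ?_
  simp [norm_mul, Complex.norm_exp, Complex.mul_re]

lemma integral_cexp_Iic {z : ℂ} (hz : 0 < z.re) :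
    ∫ x in Iic (0:ℝ), Complex.exp (z * x) = z⁻¹ := by
  have hz0 : z ≠ 0 := fun h => by simp [h] at hz
  have := integral_Iic_of_hasDerivAt_of_tendsto'
    (f := fun y : ℝ => z⁻¹ * Complex.exp (z * y)) (f' := fun y : ℝ => Complex.exp (z * y))
    (a := 0) (m := 0) (fun x _ => hasDerivAt_cexp_mul hz0 x) (integrableOn_cexp_Iic hz)
    (tendsto_cexp_atBot hz)
  rw [this]
  simp

lemma tendsto_cexp_atTop {z : ℂ} (hz : z.re < 0) :
    Tendsto (fun x : ℝ => z⁻¹ * Complex.exp (z * x)) atTop (nhds 0) := by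
  rw [tendsto_zero_iff_norm_tendsto_zero]
  have h : Tendsto (fun x : ℝ => ‖z⁻¹‖ * Real.exp (z.re * x)) atTop (nhds (‖z⁻¹‖ * 0)) :=
    (Real.tendsto_exp_atBot.comp (tendsto_id.const_mul_atTop_of_neg hz)).const_mul _
  rw [mul_zero] at h
  refine h.congr fun x => ?_
  simp [norm_mul, Complex.norm_exp, Complex.mul_re]

lemma integral_cexp_Ioi {z : ℂ} (hz : z.re < 0) :
    ∫ x in Ioi (0:ℝ), Complex.exp (z * x) = -z⁻¹ := by
  have hz0 : z ≠ 0 := fun h => by simp [h] at hz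
  have := integral_Ioi_of_hasDerivAt_of_tendsto'
    (f := fun y : ℝ => z⁻¹ * Complex.exp (z * y)) (f' := fun y : ℝ => Complex.exp (z * y))
    (a := 0) (m := 0) (fun x _ => hasDerivAt_cexp_mul hz0 x) (integrableOn_cexp_Ioi hz)
    (tendsto_cexp_atTop hz)
  rw [this]
  simp

lemma hfun_eq_indicator_pos {c : ℝ} (hc : 0 < c) :
    hfun c = Set.indicator (Iio (0:ℝ)) (fun x : ℝ => Complex.exp ((c:ℂ) * x)) := by
  funext x
  simp only [hfun, if_pos hc, Set.indicator_apply, mem_Iio]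

lemma hfun_eq_indicator_neg {c : ℝ} (hc : c < 0) :
    hfun c = Set.indicator (Ici (0:ℝ)) (fun x : ℝ => -Complex.exp ((c:ℂ) * x)) := by
  funext x
  simp only [hfun, if_neg (not_lt.2 hc.le), Set.indicator_apply, mem_Ici]
  rcases lt_or_ge x 0 with h | h
  · rw [if_pos h, if_neg (not_le.2 h)]
  · rw [if_neg (not_lt.2 h), if_pos h]

lemma hfun_integrable {c : ℝ} (hc : c ≠ 0) : Integrable (hfun c) := by
  rcases hc.lt_or_gt with h | h
  · rw [hfun_eq_indicator_neg h]
    rw [integrable_indicator_iff measurableSet_Ici]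
    rw [integrableOn_Ici_iff_integrableOn_Ioi]
    exact (integrableOn_cexp_Ioi (z := (c:ℂ)) (by simpa using h)).neg
  · rw [hfun_eq_indicator_pos h]
    rw [integrable_indicator_iff measurableSet_Iio]
    exact (integrableOn_cexp_Iic (z := (c:ℂ)) (by simpa using h)).mono_set Iio_subset_Iic_self

lemma fourier_hfun {c : ℝ} (hc : c ≠ 0) (ξ : ℝ) :
    𝓕 (hfun c) ξ = ((c : ℂ) - 2 * π * ξ * Complex.I)⁻¹ := by
  rw [Real.fourier_real_eq_integral_exp_smul]
  set z : ℂ := (c:ℂ) - 2*π*ξ*Complex.I with hzdef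
  have hzre : z.re = c := by simp [hzdef]
  have key : ∀ x : ℝ, Complex.exp (↑(-2 * π * x * ξ) * Complex.I) * Complex.exp ((c:ℂ) * x)
      = Complex.exp (z * x) := by
    intro x
    rw [← Complex.exp_add]
    congr 1
    rw [hzdef]
    push_cast
    ring
  rcases hc.lt_or_gt with h | h
  · have : (fun x : ℝ => Complex.exp (↑(-2 * π * x * ξ) * Complex.I) • hfun c x)
        = Set.indicator (Ici (0:ℝ)) (fun x : ℝ => -Complex.exp (z * x)) := by
      funext x
      rw [hfun_eq_indicator_neg h]
      simp only [smul_eq_mul, Set.indicator_apply, mem_Ici]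
      rcases le_or_gt 0 x with hx | hx
      · rw [if_pos hx, if_pos hx, mul_neg, key]
      · rw [if_neg (not_le.2 hx), if_neg (not_le.2 hx), mul_zero]
    rw [this, MeasureTheory.integral_indicator measurableSet_Ici,
      MeasureTheory.integral_Ici_eq_integral_Ioi, MeasureTheory.integral_neg,
      integral_cexp_Ioi (by rw [hzre]; exact h), neg_neg]
  · have : (fun x : ℝ => Complex.exp (↑(-2 * π * x * ξ) * Complex.I) • hfun c x)
        = Set.indicator (Iio (0:ℝ)) (fun x : ℝ => Complex.exp (z * x)) := by
      funext x
      rw [hfun_eq_indicator_pos h]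
      simp only [smul_eq_mul, Set.indicator_apply, mem_Iio]
      rcases lt_or_ge x 0 with hx | hx
      · rw [if_pos hx, if_pos hx, key]
      · rw [if_neg (not_lt.2 hx), if_neg (not_lt.2 hx), mul_zero]
    rw [this, MeasureTheory.integral_indicator measurableSet_Iio,
      ← MeasureTheory.integral_Iic_eq_integral_Iio,
      integral_cexp_Iic (by rw [hzre]; exact h)]

noncomputable def gfun (a b : ℝ) (x : ℝ) : ℂ := ((b:ℂ) - (a:ℂ))⁻¹ * (hfun b x - hfun a x)

lemma gfun_continuous {a b : ℝ} (ha : a ≠ 0) (hb : 0 < b) : Continuous (gfun a b) := by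
  apply continuous_const.mul
  have hce : ∀ c : ℝ, Continuous fun x : ℝ => Complex.exp ((c:ℂ) * x) := fun c =>
    Complex.continuous_exp.comp (continuous_const.mul Complex.continuous_ofReal)
  have hfr : frontier {x : ℝ | x < 0} = {0} := frontier_Iio
  rcases ha.lt_or_gt with h | h
  · have : (fun x => hfun b x - hfun a x)
        = fun x : ℝ => if x < 0 then Complex.exp ((b:ℂ) * x) else Complex.exp ((a:ℂ) * x) := by
      funext x
      simp only [hfun, if_pos hb, if_neg (not_lt.2 h.le)]
      rcases lt_or_ge x 0 with hx | hx
      · rw [if_pos hx, if_pos hx, if_pos hx, sub_zero]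
      · rw [if_neg (not_lt.2 hx), if_neg (not_lt.2 hx), if_neg (not_lt.2 hx), zero_sub, neg_neg]
    rw [this]
    apply Continuous.if
    · intro x hx
      rw [hfr] at hx
      simp only [mem_singleton_iff] at hx
      subst hx
      simp
    · exact hce b
    · exact hce a
  · have : (fun x => hfun b x - hfun a x)
        = fun x : ℝ => if x < 0 then Complex.exp ((b:ℂ) * x) - Complex.exp ((a:ℂ) * x) else 0 := by
      funext x
      simp only [hfun, if_pos hb, if_pos h]
      rcases lt_or_ge x 0 with hx | hx
      · rw [if_pos hx, if_pos hx, if_pos hx]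
      · rw [if_neg (not_lt.2 hx), if_neg (not_lt.2 hx), if_neg (not_lt.2 hx), sub_zero]
    rw [this]
    apply Continuous.if
    · intro x hx
      rw [hfr] at hx
      simp only [mem_singleton_iff] at hx
      subst hx
      simp
    · exact (hce b).sub (hce a)
    · exact continuous_const

lemma gfun_integrable {a b : ℝ} (ha : a ≠ 0) (hb : 0 < b) : Integrable (gfun a b) :=
  (((hfun_integrable hb.ne').sub (hfun_integrable ha)).const_mul _)

lemma fourier_gfun {a b : ℝ} (ha : a ≠ 0) (hb : 0 < b) (hab : a < b) (ξ : ℝ) :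
    𝓕 (gfun a b) ξ
      = -((((a:ℂ) - 2*π*ξ*Complex.I) * ((b:ℂ) - 2*π*ξ*Complex.I)))⁻¹ := by
  have hZ : ∀ c : ℝ, c ≠ 0 → (c:ℂ) - 2*π*ξ*Complex.I ≠ 0 := by
    intro c hc h
    apply hc
    have := congrArg Complex.re h
    simpa [Complex.mul_re] using this
  have hsplit : 𝓕 (gfun a b) ξ
      = ((b:ℂ) - (a:ℂ))⁻¹ * (𝓕 (hfun b) ξ - 𝓕 (hfun a) ξ) := by
    rw [Real.fourier_real_eq_integral_exp_smul,
      Real.fourier_real_eq_integral_exp_smul,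
      Real.fourier_real_eq_integral_exp_smul]
    unfold gfun
    have hint : ∀ c : ℝ, c ≠ 0 → Integrable
        (fun x : ℝ => Complex.exp (↑(-2 * π * x * ξ) * Complex.I) • hfun c x) := by
      intro c hc
      apply ((hfun_integrable hc).bdd_mul (c := 1) ?_ ?_)
      · exact (Complex.continuous_exp.comp
          ((Complex.continuous_ofReal.comp (by continuity)).mul
            continuous_const)).aestronglyMeasurable
      · refine ae_of_all _ fun x => ?_
        rw [Complex.norm_exp]
        simp
    have e1 : (fun x : ℝ => Complex.exp (↑(-2 * π * x * ξ) * Complex.I) •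
          (((b:ℂ)-(a:ℂ))⁻¹ * (hfun b x - hfun a x)))
        = fun x : ℝ => ((b:ℂ)-(a:ℂ))⁻¹ •
          ((Complex.exp (↑(-2 * π * x * ξ) * Complex.I) • hfun b x)
            - (Complex.exp (↑(-2 * π * x * ξ) * Complex.I) • hfun a x)) := by
      funext x
      simp only [smul_eq_mul]
      ring
    rw [e1, integral_smul, MeasureTheory.integral_sub (hint b hb.ne') (hint a ha)]
    simp only [smul_eq_mul]
  rw [hsplit, fourier_hfun hb.ne' ξ, fourier_hfun ha ξ]
  have h1 := hZ a ha
  have h2 := hZ b hb.ne'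
  have h3 : (b:ℂ) - (a:ℂ) ≠ 0 := by
    intro h
    have := congrArg Complex.re h
    simp at this
    linarith
  field_simp
  ring

lemma Fg_integrable {a b : ℝ} (ha : a ≠ 0) (hb : 0 < b) (hab : a < b) :
    Integrable (𝓕 (gfun a b)) := by
  have hformula : 𝓕 (gfun a b) = fun ξ : ℝ =>
      -((((a:ℂ) - 2*π*ξ*Complex.I) * ((b:ℂ) - 2*π*ξ*Complex.I)))⁻¹ :=
    funext (fourier_gfun ha hb hab)
  rw [hformula]
  apply Integrable.neg
  have hZ : ∀ c : ℝ, c ≠ 0 → ∀ ξ : ℝ, (c:ℂ) - 2*π*ξ*Complex.I ≠ 0 := by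
    intro c hc ξ h
    apply hc
    have := congrArg Complex.re h
    simpa [Complex.mul_re] using this
  have hcontZ : ∀ c : ℝ, Continuous fun ξ : ℝ => (c:ℂ) - 2*π*ξ*Complex.I := by
    intro c
    fun_prop
  have hcont : Continuous fun ξ : ℝ =>
      ((((a:ℂ) - 2*π*ξ*Complex.I) * ((b:ℂ) - 2*π*ξ*Complex.I)))⁻¹ := by
    apply Continuous.inv₀ ((hcontZ a).mul (hcontZ b))
    intro ξ
    exact mul_ne_zero (hZ a ha ξ) (hZ b hb.ne' ξ)
  set s : ℝ := Real.sqrt (|a| * b) with hsdef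
  have habpos : 0 < |a| * b := mul_pos (abs_pos.2 ha) hb
  have hs : 0 < s := Real.sqrt_pos.2 habpos
  have hs2 : s^2 = |a| * b := Real.sq_sqrt habpos.le
  have hphi : Integrable (fun ξ : ℝ => (|a| * b + (2*π*ξ)^2)⁻¹) := by
    have h2 : Integrable (fun ξ : ℝ => (1 + ((2*π/s) * ξ)^2)⁻¹) :=
      integrable_inv_one_add_sq.comp_mul_left'
        (by positivity : (0:ℝ) < 2*π/s).ne'
    apply (h2.const_mul ((s^2)⁻¹)).congr
    refine ae_of_all _ fun ξ => ?_
    rw [← hs2]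
    field_simp
  apply hphi.mono' hcont.aestronglyMeasurable
  refine ae_of_all _ fun ξ => ?_
  set w : ℝ := (2*π*ξ)^2 with hwdef
  have hw : 0 ≤ w := sq_nonneg _
  have hnorm2 : ∀ c : ℝ, ‖(c:ℂ) - 2*π*ξ*Complex.I‖^2 = c^2 + w := by
    intro c
    rw [Complex.sq_norm]
    simp [Complex.normSq_apply, hwdef]
    ring
  set u : ℝ := ‖(a:ℂ) - 2*π*ξ*Complex.I‖ with hudef
  set v : ℝ := ‖(b:ℂ) - 2*π*ξ*Complex.I‖ with hvdef
  have hu : 0 ≤ u := norm_nonneg _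
  have hv : 0 ≤ v := norm_nonneg _
  have hu2 : u^2 = a^2 + w := hnorm2 a
  have hv2 : v^2 = b^2 + w := hnorm2 b
  have hsq : (|a| * b + w)^2 ≤ (u * v)^2 := by
    have h1 : (u*v)^2 = (a^2 + w) * (b^2 + w) := by rw [mul_pow, hu2, hv2]
    have h2 : |a|^2 = a^2 := sq_abs a
    nlinarith [sq_nonneg (|a| - b), hw, sq_nonneg (|a| * b)]
  have hA : (0:ℝ) ≤ |a| * b + w := by positivity
  have hle : |a| * b + w ≤ u * v := by
    have h3 := Real.sqrt_le_sqrt hsq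
    rwa [Real.sqrt_sq hA, Real.sqrt_sq (mul_nonneg hu hv)] at h3
  rw [norm_inv, norm_mul]
  have hpos : (0:ℝ) < |a| * b + w := by positivity
  exact inv_anti₀ hpos hle

/-- Lemma 2.2 (first part): the bound `|m_τ(t,μ)| ≤ (1/μ) e^{−|τ−μ||t|}` for the
inverse Fourier transform `m_τ(t,μ) = (1/2π) ∫ e^{itη} / (η² + 2iτη − τ² + μ²) dη`. -/
theorem stmt_0 (τ μ t : ℝ) (hτ : 0 < τ) (hμ : 0 < μ) (hne : τ ≠ μ) :
    ‖(1 / (2 * (Real.pi : ℂ))) * ∫ η : ℝ, Complex.exp (Complex.I * (t : ℂ) * (η : ℂ)) /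
        ((η : ℂ) ^ 2 + 2 * Complex.I * (τ : ℂ) * (η : ℂ) - (τ : ℂ) ^ 2 + (μ : ℂ) ^ 2)‖ ≤
      (1 / μ) * Real.exp (-(|τ - μ| * |t|)) := by
  set a : ℝ := τ - μ with hadef
  set b : ℝ := τ + μ with hbdef
  set F : ℝ → ℂ := fun η : ℝ => Complex.exp (Complex.I * (t : ℂ) * (η : ℂ)) /
      ((η : ℂ) ^ 2 + 2 * Complex.I * (τ : ℂ) * (η : ℂ) - (τ : ℂ) ^ 2 + (μ : ℂ) ^ 2) with hFdef
  have ha : a ≠ 0 := sub_ne_zero.2 hne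
  have hb : 0 < b := by rw [hbdef]; linarith
  have hab : a < b := by rw [hadef, hbdef]; linarith
  have habs : |a| ≤ b := by
    rw [abs_le, hadef, hbdef]
    constructor <;> linarith
  have hba : b - a = 2*μ := by rw [hadef, hbdef]; ring
  have hD : ∀ η : ℝ, (η:ℂ)^2 + 2*Complex.I*(τ:ℂ)*(η:ℂ) - (τ:ℂ)^2 + (μ:ℂ)^2
      = -(((a:ℂ) - Complex.I*η) * ((b:ℂ) - Complex.I*η)) := by
    intro η
    simp only [hadef, hbdef]
    push_cast
    linear_combination (η:ℂ)^2 * Complex.I_sq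
  have hident : 𝓕⁻ (𝓕 (gfun a b)) t = ∫ ξ : ℝ, F (2*π*ξ) := by
    rw [Real.fourierInv_eq_fourier_neg,
      Real.fourier_real_eq_integral_exp_smul]
    congr 1
    funext ξ
    rw [fourier_gfun ha hb hab ξ]
    show Complex.exp (↑(-2 * π * ξ * -t) * Complex.I) •
        -((((a:ℂ) - 2*π*ξ*Complex.I) * ((b:ℂ) - 2*π*ξ*Complex.I)))⁻¹ = F (2*π*ξ)
    rw [hFdef]
    show _ = Complex.exp (Complex.I * (t:ℂ) * ((2*π*ξ:ℝ):ℂ)) /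
      (((2*π*ξ:ℝ):ℂ) ^ 2 + 2 * Complex.I * (τ : ℂ) * ((2*π*ξ:ℝ):ℂ) - (τ : ℂ) ^ 2 + (μ : ℂ) ^ 2)
    rw [hD (2*π*ξ)]
    have e1 : Complex.exp (↑(-2 * π * ξ * -t) * Complex.I)
        = Complex.exp (Complex.I * (t:ℂ) * ((2*π*ξ:ℝ):ℂ)) := by
      congr 1
      push_cast
      ring
    have e2 : ((a:ℂ) - 2*π*ξ*Complex.I) * ((b:ℂ) - 2*π*ξ*Complex.I)
        = ((a:ℂ) - Complex.I*((2*π*ξ:ℝ):ℂ)) * ((b:ℂ) - Complex.I*((2*π*ξ:ℝ):ℂ)) := by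
      push_cast
      ring
    rw [e1, e2, smul_eq_mul, div_eq_mul_inv, inv_neg, mul_neg]
  have hinv : 𝓕⁻ (𝓕 (gfun a b)) t = gfun a b t :=
    (gfun_integrable ha hb).fourierInv_fourier_eq (Fg_integrable ha hb hab)
      (gfun_continuous ha hb).continuousAt
  have hcov : (∫ ξ : ℝ, F (2*π*ξ)) = |(2*π)⁻¹| • ∫ η : ℝ, F η :=
    MeasureTheory.Measure.integral_comp_mul_left F (2*π)
  have h2pi : (0:ℝ) < 2*π := by positivity
  have hintF : (∫ η : ℝ, F η) = ((2*π:ℝ)) • gfun a b t := by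
    rw [← hinv, hident, hcov, abs_of_pos (inv_pos.2 h2pi), smul_smul,
      mul_inv_cancel₀ h2pi.ne', one_smul]
  rw [hintF, Complex.real_smul]
  have hπC : ((π:ℝ):ℂ) ≠ 0 := Complex.ofReal_ne_zero.2 Real.pi_ne_zero
  have hsimp : (1 / (2 * (π:ℂ))) * (((2*π:ℝ):ℂ) * gfun a b t) = gfun a b t := by
    push_cast
    field_simp
  rw [hsimp]
  -- final bound
  have hb2 : ‖gfun a b t‖ ≤ (2*μ)⁻¹ * (Real.exp (-(|b| * |t|)) + Real.exp (-(|a| * |t|))) := by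
    rw [gfun]
    rw [norm_mul]
    have hc : ‖((b:ℂ) - (a:ℂ))⁻¹‖ = (2*μ)⁻¹ := by
      rw [norm_inv]
      have : ((b:ℂ) - (a:ℂ)) = ((b - a : ℝ):ℂ) := by push_cast; ring
      rw [this, Complex.norm_real, Real.norm_eq_abs, hba, abs_of_pos (by positivity)]
    rw [hc]
    apply mul_le_mul_of_nonneg_left _ (by positivity)
    exact (norm_sub_le _ _).trans (add_le_add (norm_hfun_le b t) (norm_hfun_le a t))
  have hexp : Real.exp (-(|b| * |t|)) ≤ Real.exp (-(|a| * |t|)) := by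
    apply Real.exp_le_exp.2
    have : |a| * |t| ≤ |b| * |t| := by
      apply mul_le_mul_of_nonneg_right _ (abs_nonneg t)
      rw [abs_of_pos hb]
      exact habs
    linarith
  calc ‖gfun a b t‖ ≤ (2*μ)⁻¹ * (Real.exp (-(|b| * |t|)) + Real.exp (-(|a| * |t|))) := hb2
    _ ≤ (2*μ)⁻¹ * (Real.exp (-(|a| * |t|)) + Real.exp (-(|a| * |t|))) := by
        apply mul_le_mul_of_nonneg_left _ (by positivity)
        linarith
    _ = (1/μ) * Real.exp (-(|a| * |t|)) := by
        field_simp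
        ring
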